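/- Stack shape invariant for RKNL: for any reachable configuration k with stack s, the decoding of s (with respect to the execution history of k) is a normal-order context. -/

import Mathlib

set_option autoImplicit false
set_option maxHeartbeats 1000000

namespace RKNL

/- Pure lambda terms over a type of variables. -/
inductive Tm (V : Type) : Type
  | var : V → Tm V
  | app : Tm V → Tm V → Tm V
  | lam : V → Tm V → Tm V
  deriving DecidableEq

abbrev Ident : Type := ℕ
abbrev Loc : Type := ℕ

/-- Lookup in an association list (first match). -/
def lookupL {β : Type} : List (ℕ × β) → ℕ → Option β
  | [], _ => none
  | (a, b) :: l, x => if x = a then some b else lookupL l x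

/-- Update of an association list. -/
def updL {β : Type} (l : List (ℕ × β)) (x : ℕ) (b : β) : List (ℕ × β) :=
  l.map fun p => if p.1 = x then (x, b) else p

/-- Environments map identifiers to store locations. -/
abbrev Env : Type := List (Ident × Loc)

/-- Closures pair a term with an environment. -/
abbrev Closure : Type := Tm Ident × Env

/-- Values: terms (normal forms), or abstraction closures annotated with a location. -/
inductive Value : Type
  | tm : Tm Ident → Value
  | abs : Ident → Tm Ident → Env → Loc → Value
  deriving DecidableEq

/-- Storable values (memothunks):
`pend x t e` is the `todo ⊥` placeholder allocated for the abstraction `(λx.t, e)`,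
`todo c` an unevaluated argument thunk, `done v` a memoized value. -/
inductive Storable : Type
  | pend : Ident → Tm Ident → Env → Storable
  | todo : Closure → Storable
  | done : Value → Storable
  deriving DecidableEq

/-- Stores map locations to storable values. -/
abbrev Store : Type := List (Loc × Storable)

/-- Stack frames: `arg c` is `(□ c)`, `appL t` is `(t □)`, `lamF x` is `λx.□`,
`cache ℓ` is `ℓ := □`. -/
inductive Frame : Type
  | arg : Closure → Frame
  | appL : Tm Ident → Frame
  | lamF : Ident → Frame
  | cache : Loc → Frame
  deriving DecidableEq

abbrev Stack : Type := List Frame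

/-- Machine configurations: evaluation mode `⟨c, s, σ⟩▸` and continue mode `⟨σ, v, s⟩◂`. -/
inductive Conf : Type
  | eval : Closure → Stack → Store → Conf
  | cont : Store → Value → Stack → Conf

/-- The initial configuration loading a term. -/
def Conf.init (t : Tm Ident) : Conf := .eval (t, []) [] []

def Conf.store : Conf → Store
  | .eval _ _ σ => σ
  | .cont σ _ _ => σ

def Conf.stack : Conf → Stack
  | .eval _ s _ => s
  | .cont _ _ s => s

/- Identifiers occurring in a configuration (used for freshness of generated names). -/
def tmVars : Tm Ident → List Ident
  | .var x => [x]
  | .app a b => tmVars a ++ tmVars b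
  | .lam x t => x :: tmVars t

def envVars (e : Env) : List Ident := e.map Prod.fst

def valVars : Value → List Ident
  | .tm t => tmVars t
  | .abs x t e _ => x :: (tmVars t ++ envVars e)

def storableVars : Storable → List Ident
  | .pend x t e => x :: (tmVars t ++ envVars e)
  | .todo c => tmVars c.1 ++ envVars c.2
  | .done v => valVars v

def frameVars : Frame → List Ident
  | .arg c => tmVars c.1 ++ envVars c.2
  | .appL t => tmVars t
  | .lamF x => [x]
  | .cache _ => []

def stackVars (s : Stack) : List Ident := s.foldr (fun f acc => frameVars f ++ acc) []

def storeVars (σ : Store) : List Ident := σ.foldr (fun p acc => storableVars p.2 ++ acc) []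

def confVars : Conf → List Ident
  | .eval c s σ => tmVars c.1 ++ envVars c.2 ++ stackVars s ++ storeVars σ
  | .cont σ v s => valVars v ++ stackVars s ++ storeVars σ

/-- The top of the stack is not an argument frame. -/
def Stack.noArgTop : Stack → Prop
  | Frame.arg _ :: _ => False
  | _ => True

/-- The top of the stack is not a memoization frame. -/
def Stack.noCacheTop : Stack → Prop
  | Frame.cache _ :: _ => False
  | _ => True

/-- The eleven transitions of the RKNL abstract machine, indexed by rule number. -/
inductive Step : ℕ → Conf → Conf → Prop
  | r1 {t1 t2 : Tm Ident} {e : Env} {s : Stack} {σ : Store} :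
      Step 1 (.eval (.app t1 t2, e) s σ) (.eval (t1, e) (.arg (t2, e) :: s) σ)
  | r2 {x : Ident} {t : Tm Ident} {e : Env} {s : Stack} {σ : Store} {ℓ : Loc}
      (h : lookupL σ ℓ = none) :
      Step 2 (.eval (.lam x t, e) s σ) (.cont ((ℓ, .pend x t e) :: σ) (.abs x t e ℓ) s)
  | r3 {x : Ident} {e e2 : Env} {s : Stack} {σ : Store} {ℓ : Loc} {t : Tm Ident}
      (he : lookupL e x = some ℓ) (hσ : lookupL σ ℓ = some (.todo (t, e2))) :
      Step 3 (.eval (.var x, e) s σ) (.eval (t, e2) (.cache ℓ :: s) σ)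
  | r4done {x : Ident} {e : Env} {s : Stack} {σ : Store} {ℓ : Loc} {v : Value}
      (he : lookupL e x = some ℓ) (hσ : lookupL σ ℓ = some (.done v)) :
      Step 4 (.eval (.var x, e) s σ) (.cont σ v s)
  | r4free {x : Ident} {e : Env} {s : Stack} {σ : Store}
      (he : lookupL e x = none) :
      Step 4 (.eval (.var x, e) s σ) (.cont σ (.tm (.var x)) s)
  | r5 {σ : Store} {v : Value} {ℓ : Loc} {s : Stack} :
      Step 5 (.cont σ v (.cache ℓ :: s)) (.cont (updL σ ℓ (.done v)) v s)
  | r6 {σ : Store} {x : Ident} {t t2 : Tm Ident} {e e2 : Env} {ℓ ℓ2 : Loc} {s : Stack}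
      (h : lookupL σ ℓ2 = none) :
      Step 6 (.cont σ (.abs x t e ℓ) (.arg (t2, e2) :: s))
             (.eval (t, (x, ℓ2) :: e) s ((ℓ2, .todo (t2, e2)) :: σ))
  | r7 {σ : Store} {x x' x0 : Ident} {t t0 : Tm Ident} {e e0 : Env} {ℓ ℓ2 : Loc} {s : Stack}
      (hσ : lookupL σ ℓ = some (.pend x0 t0 e0))
      (hs1 : Stack.noArgTop s) (hs2 : Stack.noCacheTop s)
      (hℓ2 : lookupL σ ℓ2 = none)
      (hx' : x' ∉ confVars (.cont σ (.abs x t e ℓ) s)) :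
      Step 7 (.cont σ (.abs x t e ℓ) s)
             (.eval (t, (x, ℓ2) :: e) (.lamF x' :: .cache ℓ :: s)
                    ((ℓ2, .done (.tm (.var x'))) :: σ))
  | r8 {σ : Store} {x : Ident} {t : Tm Ident} {e : Env} {ℓ : Loc} {s : Stack} {v : Value}
      (hσ : lookupL σ ℓ = some (.done v))
      (hs1 : Stack.noArgTop s) (hs2 : Stack.noCacheTop s) :
      Step 8 (.cont σ (.abs x t e ℓ) s) (.cont σ v s)
  | r9 {σ : Store} {t t2 : Tm Ident} {e2 : Env} {s : Stack} :
      Step 9 (.cont σ (.tm t) (.arg (t2, e2) :: s)) (.eval (t2, e2) (.appL t :: s) σ)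
  | r10 {σ : Store} {t1 t2 : Tm Ident} {s : Stack} :
      Step 10 (.cont σ (.tm t2) (.appL t1 :: s)) (.cont σ (.tm (.app t1 t2)) s)
  | r11 {σ : Store} {t : Tm Ident} {x : Ident} {s : Stack} :
      Step 11 (.cont σ (.tm t) (.lamF x :: s)) (.cont σ (.tm (.lam x t)) s)

/-- Reachability by machine transitions. -/
inductive Reach (k0 : Conf) : Conf → Prop
  | refl : Reach k0 k0
  | step {k k' : Conf} {r : ℕ} : Reach k0 k → Step r k k' → Reach k0 k'

/- Generic syntax material used by the decoding: variable renaming of terms,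
one-hole contexts, neutral/normal terms, normal-order contexts,
capture-avoiding substitution, normal-order reduction and α-equivalence. -/

def Tm.mapVar {V V' : Type} (f : V → V') : Tm V → Tm V'
  | .var x => .var (f x)
  | .app a b => .app (Tm.mapVar f a) (Tm.mapVar f b)
  | .lam x t => .lam (f x) (Tm.mapVar f t)

/-- Variables of decoded terms: `Sum.inl x` is an ordinary identifier
(free variables and generated fresh names), `Sum.inr x` is the overlined
(marked) copy `x̄`, taken from a disjoint copy of the set of identifiers. -/
abbrev W : Type := Ident ⊕ Ident

/-- Embedding of machine terms into decoded terms. -/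
def emb (t : Tm Ident) : Tm W := Tm.mapVar Sum.inl t

/-- One-hole contexts. -/
inductive Ctx (V : Type) : Type
  | hole : Ctx V
  | appL : Ctx V → Tm V → Ctx V
  | appR : Tm V → Ctx V → Ctx V
  | lam : V → Ctx V → Ctx V

def Ctx.plug {V : Type} : Ctx V → Tm V → Tm V
  | .hole, t => t
  | .appL C u, t => .app (Ctx.plug C t) u
  | .appR u C, t => .app u (Ctx.plug C t)
  | .lam x C, t => .lam x (Ctx.plug C t)

def Ctx.comp {V : Type} : Ctx V → Ctx V → Ctx V
  | .hole, D => D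
  | .appL C u, D => .appL (Ctx.comp C D) u
  | .appR u C, D => .appR u (Ctx.comp C D)
  | .lam x C, D => .lam x (Ctx.comp C D)

mutual
  inductive Neutral {V : Type} : Tm V → Prop
    | var (x : V) : Neutral (.var x)
    | app {a n : Tm V} : Neutral a → NormalTm n → Neutral (.app a n)
  inductive NormalTm {V : Type} : Tm V → Prop
    | lam {x : V} {t : Tm V} : NormalTm t → NormalTm (.lam x t)
    | neu {a : Tm V} : Neutral a → NormalTm a
end

mutual
  inductive NOCtx {V : Type} : Ctx V → Prop
    | bar {C : Ctx V} : NOBar C → NOCtx C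
    | lam {x : V} {C : Ctx V} : NOCtx C → NOCtx (.lam x C)
  inductive NOBar {V : Type} : Ctx V → Prop
    | hole : NOBar .hole
    | appL {C : Ctx V} {t : Tm V} : NOBar C → NOBar (.appL C t)
    | appR {a : Tm V} {C : Ctx V} : Neutral a → NOCtx C → NOBar (.appR a C)
end

/-- `x` occurs free in a term. -/
inductive FreeIn {V : Type} (x : V) : Tm V → Prop
  | var : FreeIn x (.var x)
  | appL {a b : Tm V} : FreeIn x a → FreeIn x (.app a b)
  | appR {a b : Tm V} : FreeIn x b → FreeIn x (.app a b)
  | lam {y : V} {t : Tm V} : x ≠ y → FreeIn x t → FreeIn x (.lam y t)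

/-- Capture-avoiding substitution `t{x := u}` (as a relation, allowing
α-renaming of binders that would capture variables of `u`). -/
inductive SubstRel {V : Type} : V → Tm V → Tm V → Tm V → Prop
  | var_eq {x : V} {u : Tm V} : SubstRel x u (.var x) u
  | var_ne {x y : V} {u : Tm V} : y ≠ x → SubstRel x u (.var y) (.var y)
  | app {x : V} {u a a' b b' : Tm V} : SubstRel x u a a' → SubstRel x u b b' →
      SubstRel x u (.app a b) (.app a' b')
  | lam_same {x : V} {u t : Tm V} : SubstRel x u (.lam x t) (.lam x t)
  | lam {x y : V} {u t t' : Tm V} : y ≠ x → ¬ FreeIn y u → SubstRel x u t t' →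
      SubstRel x u (.lam y t) (.lam y t')
  | lam_rename {x y z : V} {u t t0 t' : Tm V} : y ≠ x → FreeIn y u →
      z ≠ x → ¬ FreeIn z u → ¬ FreeIn z t →
      SubstRel y (.var z) t t0 → SubstRel x u t0 t' →
      SubstRel x u (.lam y t) (.lam z t')

/-- One step of normal-order reduction: β-contraction in a normal-order context. -/
inductive NOStep {V : Type} : Tm V → Tm V → Prop
  | mk {N : Ctx V} {x : V} {b u r : Tm V} :
      NOCtx N → SubstRel x u b r →
      NOStep (N.plug (.app (.lam x b) u)) (N.plug r)

/-- Correspondence of variables under a list of bound-variable renamings. -/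
inductive AVar {V : Type} : List (V × V) → V → V → Prop
  | nil {x : V} : AVar [] x x
  | here {x y : V} {ρ : List (V × V)} : AVar ((x, y) :: ρ) x y
  | there {x y a b : V} {ρ : List (V × V)} :
      x ≠ a → y ≠ b → AVar ρ x y → AVar ((a, b) :: ρ) x y

/-- α-equivalence up to a list of bound-variable renamings. -/
inductive Alpha {V : Type} : List (V × V) → Tm V → Tm V → Prop
  | var {ρ : List (V × V)} {x y : V} : AVar ρ x y → Alpha ρ (.var x) (.var y)
  | app {ρ : List (V × V)} {a a' b b' : Tm V} :
      Alpha ρ a a' → Alpha ρ b b' → Alpha ρ (.app a b) (.app a' b')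
  | lam {ρ : List (V × V)} {x y : V} {t t' : Tm V} :
      Alpha ((x, y) :: ρ) t t' → Alpha ρ (.lam x t) (.lam y t')

/-- α-equivalence: equality up to renaming of bound variables. -/
def AlphaEq {V : Type} (t t' : Tm V) : Prop := Alpha [] t t'

/-- Subterm relation. -/
inductive Subtm {V : Type} : Tm V → Tm V → Prop
  | refl (t : Tm V) : Subtm t t
  | appL {s a b : Tm V} : Subtm s a → Subtm s (.app a b)
  | appR {s a b : Tm V} : Subtm s b → Subtm s (.app a b)
  | lam {s t : Tm V} {x : V} : Subtm s t → Subtm s (.lam x t)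

def IsRedex {V : Type} (t : Tm V) : Prop := ∃ (x : V) (b u : Tm V), t = .app (.lam x b) u

/-- β-normal form: no subterm is a β-redex. -/
def BetaNormal {V : Type} (t : Tm V) : Prop := ∀ s : Tm V, Subtm s t → ¬ IsRedex s

/- The history-dependent decoding of RKNL configurations. -/

/-- `HistFrom k0 H k` : `H` is the full sequence of configurations (oldest
first) of an execution from `k0` to `k`. -/
inductive HistFrom (k0 : Conf) : List Conf → Conf → Prop
  | refl : HistFrom k0 [k0] k0
  | step {H : List Conf} {k k' : Conf} {r : ℕ} :
      HistFrom k0 H k → Step r k k' → HistFrom k0 (H ++ [k']) k'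

/-- `initOf H ℓ = some (H', sv)` : in the history `H`, location `ℓ` was
initialized with the storable value `sv`, and `H'` is the prefix of the history
up to (and including) the configuration where `ℓ` was initialized. -/
def initOf : List Conf → Loc → Option (List Conf × Storable)
  | [], _ => none
  | k :: H, ℓ =>
    match lookupL (Conf.store k) ℓ with
    | some sv => some ([k], sv)
    | none => Option.map (fun p => (k :: p.1, p.2)) (initOf H ℓ)

/-- Decoding environments: an identifier is mapped either to a store location
(`Sum.inl ℓ`) or to an overlined variable `ȳ` (`Sum.inr y`) introduced when
decoding an abstraction. -/
abbrev DEnv : Type := List (Ident × (Loc ⊕ Ident))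

def embEnv (e : Env) : DEnv := e.map fun p => (p.1, Sum.inl p.2)

/-- Decoding of closures relative to an execution history:
`DecC H t e d` means the closure with term `t` and decoding environment `e`
decodes to the term `d` relative to the history `H`. A variable bound to a
location initialized (by rule 6) with an argument thunk decodes to the decoding
of that thunk at the time of initialization; a variable bound to a location
initialized (by rule 7) with a fresh variable decodes to that variable; an
unbound variable decodes to itself. -/
inductive DecC : List Conf → Tm Ident → DEnv → Tm W → Prop
  | app {H : List Conf} {t1 t2 : Tm Ident} {e : DEnv} {d1 d2 : Tm W} :
      DecC H t1 e d1 → DecC H t2 e d2 → DecC H (.app t1 t2) e (.app d1 d2)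
  | lam {H : List Conf} {x : Ident} {t : Tm Ident} {e : DEnv} {d : Tm W} :
      DecC H t ((x, Sum.inr x) :: e) d → DecC H (.lam x t) e (.lam (Sum.inr x) d)
  | var_bar {H : List Conf} {x y : Ident} {e : DEnv} :
      lookupL e x = some (Sum.inr y) → DecC H (.var x) e (.var (Sum.inr y))
  | var_arg {H H' : List Conf} {x : Ident} {e : DEnv} {ℓ : Loc}
      {t2 : Tm Ident} {e2 : Env} {d : Tm W} :
      lookupL e x = some (Sum.inl ℓ) →
      initOf H ℓ = some (H', .todo (t2, e2)) →
      DecC H' t2 (embEnv e2) d →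
      DecC H (.var x) e d
  | var_fresh {H H' : List Conf} {x x' : Ident} {e : DEnv} {ℓ : Loc} :
      lookupL e x = some (Sum.inl ℓ) →
      initOf H ℓ = some (H', .done (.tm (.var x'))) →
      DecC H (.var x) e (.var (Sum.inl x'))
  | var_free {H : List Conf} {x : Ident} {e : DEnv} :
      lookupL e x = none → DecC H (.var x) e (.var (Sum.inl x))

/-- Decoding of values. -/
inductive DecV : List Conf → Value → Tm W → Prop
  | tm {H : List Conf} {t : Tm Ident} : DecV H (.tm t) (emb t)
  | abs {H : List Conf} {x : Ident} {t : Tm Ident} {e : Env} {ℓ : Loc} {d : Tm W} :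
      DecC H (.lam x t) (embEnv e) d → DecV H (.abs x t e ℓ) d

/-- Decoding of stacks into one-hole contexts (memoization frames are ignored). -/
inductive DecS : List Conf → Stack → Ctx W → Prop
  | nil {H : List Conf} : DecS H [] .hole
  | arg {H : List Conf} {t : Tm Ident} {e : Env} {s : Stack} {C : Ctx W} {d : Tm W} :
      DecS H s C → DecC H t (embEnv e) d →
      DecS H (.arg (t, e) :: s) (C.comp (.appL .hole d))
  | appL {H : List Conf} {t : Tm Ident} {s : Stack} {C : Ctx W} :
      DecS H s C → DecS H (.appL t :: s) (C.comp (.appR (emb t) .hole))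
  | lamF {H : List Conf} {x : Ident} {s : Stack} {C : Ctx W} :
      DecS H s C → DecS H (.lamF x :: s) (C.comp (.lam (Sum.inl x) .hole))
  | cache {H : List Conf} {ℓ : Loc} {s : Stack} {C : Ctx W} :
      DecS H s C → DecS H (.cache ℓ :: s) C

/-- Decoding of configurations: the decoded focus is plugged into the decoded stack. -/
inductive DecK : List Conf → Conf → Tm W → Prop
  | eval {H : List Conf} {t : Tm Ident} {e : Env} {s : Stack} {σ : Store}
      {C : Ctx W} {d : Tm W} :
      DecS H s C → DecC H t (embEnv e) d → DecK H (.eval (t, e) s σ) (C.plug d)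
  | cont {H : List Conf} {σ : Store} {v : Value} {s : Stack} {C : Ctx W} {d : Tm W} :
      DecS H s C → DecV H v d → DecK H (.cont σ v s) (C.plug d)

/- ===================== Auxiliary development ===================== -/

/- Location sets occurring in environments of a configuration. -/

def envLocs (e : Env) : List Loc := e.map Prod.snd

def svEnvs : Storable → List Loc
  | .todo c => envLocs c.2
  | .done (.abs _ _ e _) => envLocs e
  | _ => []

def frEnvs : Frame → List Loc
  | .arg c => envLocs c.2
  | _ => []

def stkLocs : Stack → List Loc
  | [] => []
  | f :: s => frEnvs f ++ stkLocs s

def stoLocs : Store → List Loc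
  | [] => []
  | p :: σ => svEnvs p.2 ++ stoLocs σ

def vLocs : Value → List Loc
  | .abs _ _ e _ => envLocs e
  | _ => []

def kLocs : Conf → List Loc
  | .eval c s σ => envLocs c.2 ++ stkLocs s ++ stoLocs σ
  | .cont σ v s => vLocs v ++ stkLocs s ++ stoLocs σ

@[simp] lemma svEnvs_done (v : Value) : svEnvs (.done v) = vLocs v := by
  cases v <;> rfl

@[simp] lemma envLocs_cons (p : Ident × Loc) (e : Env) :
    envLocs (p :: e) = p.2 :: envLocs e := rfl

@[simp] lemma emb_var (x : Ident) : emb (.var x) = .var (Sum.inl x) := rfl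
@[simp] lemma emb_app (a b : Tm Ident) : emb (.app a b) = .app (emb a) (emb b) := rfl
@[simp] lemma emb_lam (x : Ident) (t : Tm Ident) :
    emb (.lam x t) = .lam (Sum.inl x) (emb t) := rfl

/- lookup / update lemmas -/

lemma lookupL_cons {β : Type} (a : ℕ) (b : β) (l : List (ℕ × β)) (x : ℕ) :
    lookupL ((a, b) :: l) x = if x = a then some b else lookupL l x := rfl

lemma lookupL_mem {β : Type} {l : List (ℕ × β)} {x : ℕ} {b : β}
    (h : lookupL l x = some b) : (x, b) ∈ l := by
  induction l with
  | nil => simp [lookupL] at h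
  | cons p l ih =>
      obtain ⟨a, c⟩ := p
      rw [lookupL_cons] at h
      split at h
      · obtain rfl := (Option.some_injective _ h)
        subst_vars; exact List.mem_cons_self
      · exact List.mem_cons_of_mem _ (ih h)

lemma lookupL_updL {β : Type} (σ : List (ℕ × β)) (ℓ : ℕ) (b : β) (x : ℕ) :
    lookupL (updL σ ℓ b) x =
      if x = ℓ then (lookupL σ ℓ).map (fun _ => b) else lookupL σ x := by
  induction σ with
  | nil => simp [updL, lookupL]
  | cons p σ ih =>
      obtain ⟨a, c⟩ := p
      show lookupL ((if a = ℓ then (ℓ, b) else (a, c)) :: updL σ ℓ b) x = _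
      by_cases hal : a = ℓ
      · subst hal
        rw [if_pos rfl]
        by_cases hx : x = a
        · subst hx; simp [lookupL_cons]
        · simp [lookupL_cons, hx, ih]
      · rw [if_neg hal]
        by_cases hx : x = a
        · subst hx; simp [lookupL_cons, hal]
        · simp [lookupL_cons, hx, ih, (Ne.symm hal : ¬ ℓ = a)]

lemma mem_stoLocs {σ : Store} {ℓ0 : Loc} {sv : Storable} {ℓ : Loc}
    (h : (ℓ0, sv) ∈ σ) (h2 : ℓ ∈ svEnvs sv) : ℓ ∈ stoLocs σ := by
  induction σ with
  | nil => cases h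
  | cons p σ ih =>
      rcases List.mem_cons.1 h with h | h
      · subst h; simp [stoLocs]; exact Or.inl h2
      · simp [stoLocs]; exact Or.inr (ih h)

lemma stoLocs_updL {σ : Store} {ℓ0 : Loc} {b : Storable} {ℓ : Loc}
    (h : ℓ ∈ stoLocs (updL σ ℓ0 b)) : ℓ ∈ stoLocs σ ∨ ℓ ∈ svEnvs b := by
  induction σ with
  | nil => simp [updL, stoLocs] at h
  | cons p σ ih =>
      simp only [updL, List.map_cons] at h
      simp only [stoLocs] at h ⊢
      rcases List.mem_append.1 h with h | h
      · split at h
        · exact Or.inr h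
        · exact Or.inl (List.mem_append.2 (Or.inl h))
      · rcases ih h with h | h
        · exact Or.inl (List.mem_append.2 (Or.inr h))
        · exact Or.inr h

lemma lookup_envLocs {e : Env} {x : Ident} {ℓ : Loc}
    (h : lookupL e x = some ℓ) : ℓ ∈ envLocs e := by
  have := lookupL_mem h
  simp [envLocs]
  exact ⟨x, this⟩

lemma svEnvs_sub_stoLocs {σ : Store} {ℓ0 : Loc} {sv : Storable}
    (h : lookupL σ ℓ0 = some sv) : ∀ ℓ ∈ svEnvs sv, ℓ ∈ stoLocs σ :=
  fun _ hm => mem_stoLocs (lookupL_mem h) hm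

/- Classes of store locations. -/

def vOK : Value → Prop
  | .tm t => Neutral (emb t)
  | _ => True

def svE : Storable → Prop
  | .todo _ => True
  | .done v => vOK v
  | .pend _ _ _ => False

def svP : Storable → Prop
  | .pend _ _ _ => True
  | .done (.tm (.lam _ _)) => True
  | _ => False

def EClass (σ : Store) (ℓ : Loc) : Prop := ∃ sv, lookupL σ ℓ = some sv ∧ svE sv
def PClass (σ : Store) (ℓ : Loc) : Prop := ∃ sv, lookupL σ ℓ = some sv ∧ svP sv

lemma not_neutral_lam {x : W} {t : Tm W} : ¬ Neutral (.lam x t) := by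
  intro h; cases h

lemma EP_disjoint {σ : Store} {ℓ : Loc} (hE : EClass σ ℓ) (hP : PClass σ ℓ) : False := by
  obtain ⟨sv, h1, he⟩ := hE
  obtain ⟨sv', h2, hp⟩ := hP
  rw [h1] at h2
  obtain rfl := Option.some_injective _ h2
  cases sv with
  | pend x t e => exact he
  | todo c => exact hp
  | done v =>
      cases v with
      | tm t =>
          cases t with
          | lam x b => exact not_neutral_lam (by simpa [svE, vOK] using he)
          | var x => exact hp
          | app a b => exact hp
      | abs x t e ℓ' => exact hp

/- Class preservation lemmas. -/

lemma EClass_cons_fresh {σ : Store} {ℓ0 : Loc} {sv : Storable} {ℓ : Loc}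
    (h0 : lookupL σ ℓ0 = none) (h : EClass σ ℓ) : EClass ((ℓ0, sv) :: σ) ℓ := by
  obtain ⟨sv', hl, hs⟩ := h
  refine ⟨sv', ?_, hs⟩
  rw [lookupL_cons]
  split
  · subst_vars; rw [hl] at h0; cases h0
  · exact hl

lemma PClass_cons_fresh {σ : Store} {ℓ0 : Loc} {sv : Storable} {ℓ : Loc}
    (h0 : lookupL σ ℓ0 = none) (h : PClass σ ℓ) : PClass ((ℓ0, sv) :: σ) ℓ := by
  obtain ⟨sv', hl, hs⟩ := h
  refine ⟨sv', ?_, hs⟩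
  rw [lookupL_cons]
  split
  · subst_vars; rw [hl] at h0; cases h0
  · exact hl

lemma EClass_upd_done {σ : Store} {ℓ0 : Loc} {v : Value} {ℓ : Loc}
    (hv : vOK v) (h : EClass σ ℓ) : EClass (updL σ ℓ0 (.done v)) ℓ := by
  obtain ⟨sv', hl, hs⟩ := h
  rw [show EClass (updL σ ℓ0 (.done v)) ℓ =
    (∃ sv, lookupL (updL σ ℓ0 (.done v)) ℓ = some sv ∧ svE sv) from rfl]
  rw [lookupL_updL]
  split
  · subst_vars
    exact ⟨.done v, by rw [hl]; rfl, by simpa [svE] using hv⟩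
  · exact ⟨sv', hl, hs⟩

lemma PClass_upd_of_E {σ : Store} {ℓ0 : Loc} {b : Storable} {ℓ : Loc}
    (hE : EClass σ ℓ0) (h : PClass σ ℓ) : PClass (updL σ ℓ0 b) ℓ := by
  obtain ⟨sv', hl, hs⟩ := h
  refine ⟨sv', ?_, hs⟩
  rw [lookupL_updL]
  split
  · subst_vars; exact absurd hE (fun hE => EP_disjoint hE ⟨sv', hl, hs⟩)
  · exact hl

lemma EClass_upd_of_P {σ : Store} {ℓ0 : Loc} {b : Storable} {ℓ : Loc}
    (hP : PClass σ ℓ0) (h : EClass σ ℓ) : EClass (updL σ ℓ0 b) ℓ := by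
  obtain ⟨sv', hl, hs⟩ := h
  refine ⟨sv', ?_, hs⟩
  rw [lookupL_updL]
  split
  · subst_vars; exact absurd hP (EP_disjoint ⟨sv', hl, hs⟩)
  · exact hl

lemma PClass_upd_lam {σ : Store} {ℓ0 : Loc} {x : Ident} {b : Tm Ident} {ℓ : Loc}
    (h : PClass σ ℓ) : PClass (updL σ ℓ0 (.done (.tm (.lam x b)))) ℓ := by
  obtain ⟨sv', hl, hs⟩ := h
  rw [show PClass (updL σ ℓ0 (.done (.tm (.lam x b)))) ℓ =
    (∃ sv, lookupL (updL σ ℓ0 (.done (.tm (.lam x b)))) ℓ = some sv ∧ svP sv) from rfl]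
  rw [lookupL_updL]
  split
  · subst_vars
    exact ⟨_, by rw [hl]; rfl, by simp [svP]⟩
  · exact ⟨sv', hl, hs⟩

/- Stack shape grammar : `true` is the π mode, `false` the ϱ mode. -/

inductive SStk (σ : Store) : Bool → Stack → Prop
  | arg {c : Closure} {s : Stack} : SStk σ true s → SStk σ true (.arg c :: s)
  | cacheE {ℓ : Loc} {s : Stack} : EClass σ ℓ → SStk σ true s →
      SStk σ true (.cache ℓ :: s)
  | rho {s : Stack} : SStk σ false s → SStk σ true s
  | nil : SStk σ false []
  | lamF {x : Ident} {ℓ : Loc} {s : Stack} : PClass σ ℓ → SStk σ false s →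
      SStk σ false (.lamF x :: .cache ℓ :: s)
  | appL {t : Tm Ident} {s : Stack} : Neutral (emb t) → SStk σ true s →
      SStk σ false (.appL t :: s)

lemma SStk_mono {σ σ' : Store} (hE : ∀ ℓ, EClass σ ℓ → EClass σ' ℓ)
    (hP : ∀ ℓ, PClass σ ℓ → PClass σ' ℓ) :
    ∀ {b : Bool} {s : Stack}, SStk σ b s → SStk σ' b s := by
  intro b s h
  induction h with
  | arg _ ih => exact .arg ih
  | cacheE hc _ ih => exact .cacheE (hE _ hc) ih
  | rho _ ih => exact .rho ih
  | nil => exact .nil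
  | lamF hc _ ih => exact .lamF (hP _ hc) ih
  | appL hn _ ih => exact .appL hn ih

lemma SStk_cons_fresh {σ : Store} {ℓ0 : Loc} {sv : Storable}
    (h0 : lookupL σ ℓ0 = none) {b : Bool} {s : Stack} (h : SStk σ b s) :
    SStk ((ℓ0, sv) :: σ) b s :=
  SStk_mono (fun _ => EClass_cons_fresh h0) (fun _ => PClass_cons_fresh h0) h

/- Inversion lemmas for SStk. -/

lemma SStk_true_arg {σ : Store} {c : Closure} {s : Stack}
    (h : SStk σ true (.arg c :: s)) : SStk σ true s := by
  cases h with
  | arg h => exact h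
  | rho h => cases h

lemma SStk_true_cache {σ : Store} {ℓ : Loc} {s : Stack}
    (h : SStk σ true (.cache ℓ :: s)) : EClass σ ℓ ∧ SStk σ true s := by
  cases h with
  | cacheE hE h => exact ⟨hE, h⟩
  | rho h => cases h

lemma SStk_true_appL {σ : Store} {t : Tm Ident} {s : Stack}
    (h : SStk σ true (.appL t :: s)) : Neutral (emb t) ∧ SStk σ true s := by
  cases h with
  | rho h => cases h with | appL hn h => exact ⟨hn, h⟩

lemma SStk_true_lamF {σ : Store} {x : Ident} {s : Stack}
    (h : SStk σ true (.lamF x :: s)) :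
    ∃ ℓ s', s = .cache ℓ :: s' ∧ PClass σ ℓ ∧ SStk σ false s' := by
  cases h with
  | rho h => cases h with | lamF hP h => exact ⟨_, _, rfl, hP, h⟩

lemma SStk_false_of_tops {σ : Store} {s : Stack} (h : SStk σ true s)
    (h1 : Stack.noArgTop s) (h2 : Stack.noCacheTop s) : SStk σ false s := by
  cases h with
  | arg h => exact absurd h1 (by simp [Stack.noArgTop])
  | cacheE hE h => exact absurd h2 (by simp [Stack.noCacheTop])
  | rho h => exact h

/- Neutrality demand. -/

def Demand : Stack → Prop
  | .arg _ :: _ => True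
  | .cache _ :: _ => True
  | _ => False

lemma not_demand_of_false {σ : Store} {s : Stack} (h : SStk σ false s) :
    ¬ Demand s := by
  cases h <;> simp [Demand]

lemma not_demand_of_tops {s : Stack} (h1 : Stack.noArgTop s)
    (h2 : Stack.noCacheTop s) : ¬ Demand s := by
  match s with
  | [] => simp [Demand]
  | .arg c :: s => exact absurd h1 (by simp [Stack.noArgTop])
  | .cache ℓ :: s => exact absurd h2 (by simp [Stack.noCacheTop])
  | .appL t :: s => simp [Demand]
  | .lamF x :: s => simp [Demand]

/- The full machine invariant. -/

def tmOK (t : Tm Ident) (s : Stack) : Prop :=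
  NormalTm (emb t) ∧ (Demand s → Neutral (emb t))

def ContInv (σ : Store) (v : Value) (s : Stack) : Prop :=
  (SStk σ true s ∧ ∀ t, v = .tm t → tmOK t s)
  ∨ (∃ ℓ s' x b, s = .cache ℓ :: s' ∧ PClass σ ℓ ∧ SStk σ false s' ∧
      v = .tm (.lam x b) ∧ NormalTm (emb (Tm.lam x b)))

def StoreOK (σ : Store) : Prop :=
  ∀ ℓ t, lookupL σ ℓ = some (.done (.tm t)) → NormalTm (emb t)

def ModeInv : Conf → Prop
  | .eval _ s σ => SStk σ true s
  | .cont σ v s => ContInv σ v s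

def Inv (k : Conf) : Prop :=
  StoreOK k.store ∧ (∀ ℓ ∈ kLocs k, EClass k.store ℓ) ∧ ModeInv k

lemma inv_init (t0 : Tm Ident) : Inv (Conf.init t0) := by
  refine ⟨?_, ?_, ?_⟩
  · intro ℓ t h; simp [Conf.init, Conf.store, lookupL] at h
  · intro ℓ h; simp [Conf.init, kLocs, envLocs, stkLocs, stoLocs] at h
  · exact SStk.rho .nil

theorem inv_step {r : ℕ} {k k' : Conf} (hs : Step r k k') (hI : Inv k) : Inv k' := by
  obtain ⟨hSt, hL, hM⟩ := hI
  cases hs with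
  | @r1 t1 t2 e s σ =>
      simp only [Inv, ModeInv, Conf.store] at hSt hL hM ⊢
      refine ⟨hSt, ?_, SStk.arg hM⟩
      intro ℓ hm
      apply hL
      simp [kLocs, stkLocs, frEnvs] at hm ⊢
      tauto
  | @r2 x t e s σ ℓ h =>
      simp only [Inv, ModeInv, Conf.store] at hSt hL hM ⊢
      refine ⟨?_, ?_, Or.inl ⟨SStk_cons_fresh h hM, by intro t ht; cases ht⟩⟩
      · intro ℓ' t' hl
        rw [lookupL_cons] at hl
        split at hl
        · cases hl
        · exact hSt _ _ hl
      · intro ℓ' hm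
        simp [kLocs, vLocs, stoLocs, svEnvs] at hm
        have hm' : ℓ' ∈ kLocs (Conf.eval (Tm.lam x t, e) s σ) := by
          simp [kLocs]; tauto
        exact EClass_cons_fresh h (hL _ hm')
  | @r3 x e e2 s σ ℓ t he hσ =>
      simp only [Inv, ModeInv, Conf.store] at hSt hL hM ⊢
      refine ⟨hSt, ?_, SStk.cacheE ⟨_, hσ, by simp [svE]⟩ hM⟩
      intro ℓ' hm
      apply hL
      simp [kLocs, stkLocs, frEnvs] at hm ⊢
      rcases hm with hm | hm | hm
      · exact Or.inr (Or.inr (svEnvs_sub_stoLocs hσ _ hm))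
      · tauto
      · tauto
  | @r4done x e s σ ℓ v he hσ =>
      simp only [Inv, ModeInv, Conf.store] at hSt hL hM ⊢
      have hEx : EClass σ ℓ := by
        apply hL
        simp [kLocs]
        exact Or.inl (lookup_envLocs he)
      refine ⟨hSt, ?_, Or.inl ⟨hM, ?_⟩⟩
      · intro ℓ' hm
        apply hL
        simp [kLocs] at hm ⊢
        rcases hm with hm | hm | hm
        · refine Or.inr (Or.inr ?_)
          have : ℓ' ∈ svEnvs (.done v) := by simpa using hm
          exact svEnvs_sub_stoLocs hσ _ this
        · tauto
        · tauto
      · rintro t rfl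
        obtain ⟨sv, hl, hsv⟩ := hEx
        rw [hσ] at hl
        obtain rfl := Option.some_injective _ hl
        exact ⟨NormalTm.neu (by simpa [svE, vOK] using hsv),
          fun _ => by simpa [svE, vOK] using hsv⟩
  | @r4free x e s σ he =>
      simp only [Inv, ModeInv, Conf.store] at hSt hL hM ⊢
      refine ⟨hSt, ?_, Or.inl ⟨hM, ?_⟩⟩
      · intro ℓ' hm
        apply hL
        simp [kLocs, vLocs] at hm ⊢
        tauto
      · rintro t ht
        injection ht with h'
        subst h'
        exact ⟨NormalTm.neu (by simp; exact .var _), fun _ => by simp; exact .var _⟩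
  | @r5 σ v ℓ s =>
      simp only [Inv, ModeInv, Conf.store] at hSt hL hM ⊢
      rcases hM with ⟨hstk, htm⟩ | ⟨ℓ1, s1, x, b, heq, hP, hr, hv, hn⟩
      · -- popped cache is an E-cache
        obtain ⟨hE, hs'⟩ := SStk_true_cache hstk
        have hvok : vOK v := by
          cases v with
          | tm t =>
              obtain ⟨_, hd⟩ := htm t rfl
              exact hd (by simp [Demand])
          | abs x t e ℓ' => trivial
        have hEp : ∀ ℓ', EClass σ ℓ' → EClass (updL σ ℓ (.done v)) ℓ' :=
          fun _ => EClass_upd_done hvok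
        have hPp : ∀ ℓ', PClass σ ℓ' → PClass (updL σ ℓ (.done v)) ℓ' :=
          fun _ => PClass_upd_of_E hE
        refine ⟨?_, ?_, Or.inl ⟨SStk_mono hEp hPp hs', ?_⟩⟩
        · intro ℓ' t hl
          rw [lookupL_updL] at hl
          split at hl
          · rcases Option.map_eq_some_iff.1 hl with ⟨sv0, _, hsv0⟩
            have hsv1 : Storable.done v = Storable.done (.tm t) := hsv0
            obtain rfl : v = .tm t := by injection hsv1
            exact (htm t rfl).1
          · exact hSt _ _ hl
        · intro ℓ' hm
          simp [kLocs] at hm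
          rcases hm with hm | hm | hm
          · exact hEp _ (hL _ (by simp [kLocs]; tauto))
          · exact hEp _ (hL _ (by simp [kLocs, stkLocs]; tauto))
          · rcases stoLocs_updL hm with hm | hm
            · exact hEp _ (hL _ (by simp [kLocs]; tauto))
            · simp at hm
              exact hEp _ (hL _ (by simp [kLocs]; tauto))
        · rintro t rfl
          obtain ⟨h1, h2⟩ := htm t rfl
          exact ⟨h1, fun _ => h2 (by simp [Demand])⟩
      · -- popped cache is a P-cache, v is a lambda nf
        obtain ⟨h1, h2⟩ : ℓ = ℓ1 ∧ s = s1 := by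
          injection heq with h1 h2
          injection h1 with h1'
          exact ⟨h1', h2⟩
        subst h1; subst h2; subst hv
        have hEp : ∀ ℓ', EClass σ ℓ' →
            EClass (updL σ ℓ (.done (.tm (.lam x b)))) ℓ' :=
          fun _ => EClass_upd_of_P hP
        have hPp : ∀ ℓ', PClass σ ℓ' →
            PClass (updL σ ℓ (.done (.tm (.lam x b)))) ℓ' :=
          fun _ => PClass_upd_lam
        refine ⟨?_, ?_, Or.inl ⟨SStk.rho (SStk_mono hEp hPp hr), ?_⟩⟩
        · intro ℓ' t hl
          rw [lookupL_updL] at hl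
          split at hl
          · rcases Option.map_eq_some_iff.1 hl with ⟨sv0, _, hsv0⟩
            have hsv1 : Storable.done (.tm (.lam x b)) = Storable.done (.tm t) := hsv0
            obtain rfl : Tm.lam x b = t := by
              injection hsv1 with h'; injection h' with h''
            exact hn
          · exact hSt _ _ hl
        · intro ℓ' hm
          simp [kLocs, vLocs] at hm
          rcases hm with hm | hm
          · exact hEp _ (hL _ (by simp [kLocs, stkLocs]; tauto))
          · rcases stoLocs_updL hm with hm | hm
            · exact hEp _ (hL _ (by simp [kLocs]; tauto))
            · simp [vLocs] at hm
        · rintro t ht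
          injection ht with h'
          subst h'
          exact ⟨hn, fun hd => absurd hd (not_demand_of_false hr)⟩
  | @r6 σ x t t2 e e2 ℓ ℓ2 s h =>
      simp only [Inv, ModeInv, Conf.store] at hSt hL hM ⊢
      have hstk : SStk σ true s := by
        rcases hM with ⟨hstk, _⟩ | ⟨_, _, _, _, heq, _⟩
        · exact SStk_true_arg hstk
        · simp at heq
      refine ⟨?_, ?_, SStk_cons_fresh h hstk⟩
      · intro ℓ' t' hl
        rw [lookupL_cons] at hl
        split at hl
        · cases hl
        · exact hSt _ _ hl
      · intro ℓ' hm
        have hm' : ℓ' = ℓ2 ∨ (ℓ' ∈ envLocs e ∨ ℓ' ∈ stkLocs s ∨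
            ℓ' ∈ envLocs e2 ∨ ℓ' ∈ stoLocs σ) := by
          simp [kLocs, stkLocs, stoLocs, svEnvs, vLocs, frEnvs] at hm
          tauto
        rcases hm' with rfl | hm'
        · exact ⟨Storable.todo (t2, e2), by rw [lookupL_cons]; simp, by simp [svE]⟩
        · refine EClass_cons_fresh h (hL _ ?_)
          simp [kLocs, vLocs, stkLocs, frEnvs]
          tauto
  | @r7 σ x x' x0 t t0 e e0 ℓ ℓ2 s hσ hs1 hs2 hℓ2 hx' =>
      simp only [Inv, ModeInv, Conf.store] at hSt hL hM ⊢
      have hstk : SStk σ true s := by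
        rcases hM with ⟨hstk, _⟩ | ⟨_, _, _, _, heq, _, _, hveq, _⟩
        · exact hstk
        · cases hveq
      have hr : SStk σ false s := SStk_false_of_tops hstk hs1 hs2
      have hPl : PClass ((ℓ2, Storable.done (.tm (.var x'))) :: σ) ℓ := by
        refine ⟨.pend x0 t0 e0, ?_, by simp [svP]⟩
        rw [lookupL_cons]
        split
        · subst_vars; rw [hσ] at hℓ2; cases hℓ2
        · exact hσ
      refine ⟨?_, ?_, SStk.rho (SStk.lamF hPl (SStk_cons_fresh hℓ2 hr))⟩
      · intro ℓ' t' hl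
        rw [lookupL_cons] at hl
        split at hl
        · obtain rfl : Tm.var x' = t' := by
            injection hl with h'; injection h' with h''; injection h'' with h'''
          exact NormalTm.neu (by simp; exact .var _)
        · exact hSt _ _ hl
      · intro ℓ' hm
        have hm' : ℓ' = ℓ2 ∨ (ℓ' ∈ envLocs e ∨ ℓ' ∈ stkLocs s ∨
            ℓ' ∈ stoLocs σ) := by
          simp [kLocs, stkLocs, stoLocs, svEnvs, vLocs, frEnvs] at hm
          tauto
        rcases hm' with rfl | hm'
        · exact ⟨Storable.done (.tm (.var x')), by rw [lookupL_cons]; simp,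
            by simp [svE, vOK]; exact Neutral.var _⟩
        · refine EClass_cons_fresh hℓ2 (hL _ ?_)
          simp [kLocs, vLocs]
          tauto
  | @r8 σ x t e ℓ s v hσ hs1 hs2 =>
      simp only [Inv, ModeInv, Conf.store] at hSt hL hM ⊢
      have hstk : SStk σ true s := by
        rcases hM with ⟨hstk, _⟩ | ⟨_, _, _, _, _, _, _, hveq, _⟩
        · exact hstk
        · cases hveq
      refine ⟨hSt, ?_, Or.inl ⟨hstk, ?_⟩⟩
      · intro ℓ' hm
        apply hL
        simp [kLocs] at hm ⊢
        rcases hm with hm | hm | hm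
        · refine Or.inr (Or.inr ?_)
          have : ℓ' ∈ svEnvs (.done v) := by simpa using hm
          exact svEnvs_sub_stoLocs hσ _ this
        · tauto
        · tauto
      · rintro t' rfl
        exact ⟨hSt _ _ hσ, fun hd => absurd hd (not_demand_of_tops hs1 hs2)⟩
  | @r9 σ t t2 e2 s =>
      simp only [Inv, ModeInv, Conf.store] at hSt hL hM ⊢
      have hM' : SStk σ true (.arg (t2, e2) :: s) ∧ Neutral (emb t) := by
        rcases hM with ⟨hstk, htm⟩ | ⟨_, _, _, _, heq, _⟩
        · exact ⟨hstk, (htm t rfl).2 (by simp [Demand])⟩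
        · simp at heq
      refine ⟨hSt, ?_, SStk.rho (SStk.appL hM'.2 (SStk_true_arg hM'.1))⟩
      intro ℓ' hm
      apply hL
      simp [kLocs, stkLocs, frEnvs, vLocs] at hm ⊢
      tauto
  | @r10 σ t1 t2 s =>
      simp only [Inv, ModeInv, Conf.store] at hSt hL hM ⊢
      have hM' : SStk σ true (.appL t1 :: s) ∧ NormalTm (emb t2) := by
        rcases hM with ⟨hstk, htm⟩ | ⟨_, _, _, _, heq, _⟩
        · exact ⟨hstk, (htm t2 rfl).1⟩
        · simp at heq
      obtain ⟨hn1, hs'⟩ := SStk_true_appL hM'.1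
      refine ⟨hSt, ?_, Or.inl ⟨hs', ?_⟩⟩
      · intro ℓ' hm
        apply hL
        simp [kLocs, stkLocs, vLocs, frEnvs] at hm ⊢
        tauto
      · rintro t ht
        injection ht with h'
        subst h'
        have hne : Neutral (emb (Tm.app t1 t2)) := by
          simp; exact Neutral.app hn1 hM'.2
        exact ⟨NormalTm.neu hne, fun _ => hne⟩
  | @r11 σ t x s =>
      simp only [Inv, ModeInv, Conf.store] at hSt hL hM ⊢
      have hM' : SStk σ true (.lamF x :: s) ∧ NormalTm (emb t) := by
        rcases hM with ⟨hstk, htm⟩ | ⟨_, _, _, _, heq, _⟩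
        · exact ⟨hstk, (htm t rfl).1⟩
        · simp at heq
      obtain ⟨ℓ, s', rfl, hP, hr⟩ := SStk_true_lamF hM'.1
      refine ⟨hSt, ?_, Or.inr ⟨ℓ, s', x, t, rfl, hP, hr, rfl, by simp; exact NormalTm.lam hM'.2⟩⟩
      intro ℓ' hm
      apply hL
      simp [kLocs, stkLocs, vLocs, frEnvs] at hm ⊢
      tauto

lemma inv_of_hist {t0 : Tm Ident} {H : List Conf} {k : Conf}
    (h : HistFrom (Conf.init t0) H k) : Inv k := by
  induction h with
  | refl => exact inv_init t0
  | step _ hs ih => exact inv_step hs ih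

/- Decoding of π/ϱ stacks yields normal-order contexts. -/

lemma comp_hole {V : Type} (C : Ctx V) : C.comp .hole = C := by
  induction C <;> simp [Ctx.comp, *]

lemma comp_assoc {V : Type} (C D E : Ctx V) :
    (C.comp D).comp E = C.comp (D.comp E) := by
  induction C <;> simp [Ctx.comp, *]

lemma dec_no {σ : Store} {b : Bool} {s : Stack} (h : SStk σ b s) :
    ∀ {H : List Conf} {C : Ctx W}, DecS H s C → ∀ D : Ctx W,
      (b = true → NOBar D → NOCtx (Ctx.comp C D)) ∧
      (b = false → NOCtx D → NOCtx (Ctx.comp C D)) := by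
  induction h with
  | @arg c s _ ih =>
      intro H C hC D
      obtain ⟨t, e⟩ := c
      cases hC with
      | arg hC' hd =>
          refine ⟨fun _ hD => ?_, fun hb => by simp at hb⟩
          rw [comp_assoc]
          exact (ih hC' _).1 rfl (NOBar.appL hD)
  | cacheE _ _ ih =>
      intro H C hC D
      cases hC with
      | cache hC' => exact ih hC' D
  | rho _ ih =>
      intro H C hC D
      refine ⟨fun _ hD => ?_, fun hb => by simp at hb⟩
      exact ((ih hC D).2 rfl (NOCtx.bar hD))
  | nil =>
      intro H C hC D
      cases hC with
      | nil =>
          refine ⟨fun hb => by simp at hb, fun _ hD => ?_⟩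
          simpa [Ctx.comp] using hD
  | lamF _ _ ih =>
      intro H C hC D
      cases hC with
      | lamF hC' =>
          cases hC' with
          | cache hC'' =>
              refine ⟨fun hb => by simp at hb, fun _ hD => ?_⟩
              rw [comp_assoc]
              exact (ih hC'' _).2 rfl (NOCtx.lam hD)
  | appL hn _ ih =>
      intro H C hC D
      cases hC with
      | appL hC' =>
          refine ⟨fun hb => by simp at hb, fun _ hD => ?_⟩
          rw [comp_assoc]
          exact (ih hC' _).1 rfl (NOBar.appR hn hD)

/-- Stack shape invariant: for any reachable configuration `k` with history `H`,
the decoding of its stack is a normal-order context. -/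
theorem stack_shape_invariant {t0 : Tm Ident} {H : List Conf} {k : Conf}
    (h : HistFrom (Conf.init t0) H k) {C : Ctx W} (hC : DecS H k.stack C) :
    NOCtx C := by
  obtain ⟨_, _, hM⟩ := inv_of_hist h
  cases k with
  | eval c s σ =>
      simp only [ModeInv] at hM
      simp only [Conf.stack] at hC
      have := (dec_no hM hC .hole).1 rfl NOBar.hole
      rwa [comp_hole] at this
  | cont σ v s =>
      simp only [ModeInv] at hM
      simp only [Conf.stack] at hC
      rcases hM with ⟨hstk, _⟩ | ⟨ℓ, s', x, b, rfl, _, hr, _⟩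
      · have := (dec_no hstk hC .hole).1 rfl NOBar.hole
        rwa [comp_hole] at this
      · cases hC with
        | cache hC' =>
            have := (dec_no hr hC' .hole).2 rfl (NOCtx.bar NOBar.hole)
            rwa [comp_hole] at this

end RKNL
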